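/- arXiv:2306.00806 — 2 statements merged into one kernel-verified Lean document; each statement's English description precedes it below -/
import Mathlib

section
/- Let $X$ be a set, $F : X \to \mathbb{R}$, and let $V$ be a finite-dimensional space of bounded functions on a measure space. For a bounded potential $v$, define $E[v] = \inf_{\sigma \in \mathcal{P}} (F[\sigma] - \int v\, d\sigma)$ and $E^{\Phi}[v] = \inf_{\sigma \in \mathcal{P}} (F^{\Phi}[\sigma] - \int v\, d\sigma)$, where $F^{\Phi}$ is the moment-relaxed functional satisfying $E[w] = E^{\Phi}[w]$ for all $w \in V$, all $\sigma \in \mathcal{P}$ have total mass $N$, and $F^\Phi \le F$. Then $|E[v] - E^{\Phi}[v]| \le 2N \min_{w \in V} \|v - w\|_{L^\infty}$. -/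
open MeasureTheory

noncomputable section

private lemma sInf_image_lip {α : Type*} {S : Set α} (hne : S.Nonempty) {f g : α → ℝ} {d : ℝ}
    (h : ∀ a ∈ S, |f a - g a| ≤ d) (h1 : BddBelow (f '' S)) (h2 : BddBelow (g '' S)) :
    |sInf (f '' S) - sInf (g '' S)| ≤ d := by
  rw [abs_sub_le_iff]
  have k1 : sInf (f '' S) - d ≤ sInf (g '' S) := by
    apply le_csInf (hne.image g)
    rintro b ⟨a, ha, rfl⟩
    have h2' : sInf (f '' S) ≤ f a := csInf_le h1 (Set.mem_image_of_mem f ha)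
    have := (abs_sub_le_iff.mp (h a ha)).1; linarith
  have k2 : sInf (g '' S) - d ≤ sInf (f '' S) := by
    apply le_csInf (hne.image f)
    rintro b ⟨a, ha, rfl⟩
    have h2' : sInf (g '' S) ≤ g a := csInf_le h2 (Set.mem_image_of_mem g ha)
    have := (abs_sub_le_iff.mp (h a ha)).2; linarith
  constructor <;> linarith

/-- Error bound on the ground state energy for the moment-constrained approximation:
`|E[v] - E^Φ[v]| ≤ 2N min_{w ∈ V} ‖v - w‖_∞`. -/
theorem ground_state_energy_moment_error
    {X : Type*} [MeasurableSpace X] (μ : Measure X)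
    (N : ℝ) (hN : 0 ≤ N)
    (Pset : Set (X → ℝ)) (hPsetne : Pset.Nonempty)
    (hPset : ∀ σ ∈ Pset, (∀ x, 0 ≤ σ x) ∧ Integrable σ μ ∧ ∫ x, σ x ∂μ = N)
    (F FΦ : (X → ℝ) → ℝ) (hle : ∀ σ ∈ Pset, FΦ σ ≤ F σ)
    (V : Submodule ℝ (X → ℝ))
    (hVbdd : ∀ w ∈ V, Measurable w ∧ ∃ c, ∀ x, |w x| ≤ c)
    (E EΦ : (X → ℝ) → ℝ)
    (hE : ∀ v : X → ℝ, E v = sInf ((fun σ => F σ - ∫ x, v x * σ x ∂μ) '' Pset))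
    (hEΦ : ∀ v : X → ℝ, EΦ v = sInf ((fun σ => FΦ σ - ∫ x, v x * σ x ∂μ) '' Pset))
    (hbddF : ∀ v : X → ℝ, Measurable v → (∃ c, ∀ x, |v x| ≤ c) →
      BddBelow ((fun σ => F σ - ∫ x, v x * σ x ∂μ) '' Pset) ∧
      BddBelow ((fun σ => FΦ σ - ∫ x, v x * σ x ∂μ) '' Pset))
    (heq : ∀ w ∈ V, E w = EΦ w)
    (v : X → ℝ) (hvmeas : Measurable v) (hvbdd : ∃ c, ∀ x, |v x| ≤ c) :
    ∀ w ∈ V, ∀ c : ℝ, (∀ x, |v x - w x| ≤ c) → |E v - EΦ v| ≤ 2 * N * c := by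
  intro w hw c hc
  obtain ⟨hwmeas, hwbdd⟩ := hVbdd w hw
  by_cases hcneg : c < 0
  · -- then X is empty
    have hXempty : IsEmpty X := by
      by_contra h
      rw [not_isEmpty_iff] at h
      obtain ⟨x⟩ := h
      exact absurd (lt_of_le_of_lt (hc x) hcneg) (not_lt.mpr (abs_nonneg _))
    have hvw : v = w := funext fun x => hXempty.elim x
    have hNz : N = 0 := by
      obtain ⟨σ, hσ⟩ := hPsetne
      have := (hPset σ hσ).2.2
      rw [integral_of_isEmpty] at this
      linarith
    rw [hvw, heq w hw, sub_self, abs_zero, hNz]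
    nlinarith
  · push_neg at hcneg
    -- integral Lipschitz bound
    have key : ∀ σ ∈ Pset, |∫ x, v x * σ x ∂μ - ∫ x, w x * σ x ∂μ| ≤ N * c := by
      intro σ hσ
      obtain ⟨hσpos, hσint, hσN⟩ := hPset σ hσ
      have hvint : Integrable (fun x => v x * σ x) μ :=
        hσint.bdd_mul (c := hvbdd.choose) hvmeas.aestronglyMeasurable (Filter.Eventually.of_forall fun x => by simpa [Real.norm_eq_abs] using hvbdd.choose_spec x)
      have hwint : Integrable (fun x => w x * σ x) μ :=
        hσint.bdd_mul (c := hwbdd.choose) hwmeas.aestronglyMeasurable (Filter.Eventually.of_forall fun x => by simpa [Real.norm_eq_abs] using hwbdd.choose_spec x)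
      rw [← integral_sub hvint hwint]
      calc |∫ x, (v x * σ x - w x * σ x) ∂μ|
          ≤ ∫ x, |v x * σ x - w x * σ x| ∂μ := by
            simpa [Real.norm_eq_abs] using norm_integral_le_integral_norm (μ := μ)
              (f := fun x => v x * σ x - w x * σ x)
        _ ≤ ∫ x, c * σ x ∂μ := by
            apply integral_mono (hvint.sub hwint).abs (hσint.const_mul c)
            intro x
            simp only [Pi.sub_apply, Pi.abs_apply]
            have : |v x * σ x - w x * σ x| = |v x - w x| * σ x := by
              rw [← sub_mul, abs_mul, abs_of_nonneg (hσpos x)]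
            rw [this]
            exact mul_le_mul_of_nonneg_right (hc x) (hσpos x)
        _ = N * c := by rw [integral_const_mul, hσN, mul_comm]
    have hbv := hbddF v hvmeas hvbdd
    have hbw := hbddF w hwmeas ⟨_, hwbdd.choose_spec⟩
    have h1 : |E v - E w| ≤ N * c := by
      rw [hE v, hE w]
      apply sInf_image_lip hPsetne _ hbv.1 hbw.1
      intro σ hσ
      simpa [sub_sub_sub_cancel_left, abs_sub_comm] using key σ hσ
    have h2 : |EΦ v - EΦ w| ≤ N * c := by
      rw [hEΦ v, hEΦ w]
      apply sInf_image_lip hPsetne _ hbv.2 hbw.2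
      intro σ hσ
      simpa [sub_sub_sub_cancel_left, abs_sub_comm] using key σ hσ
    have h3 : E w = EΦ w := heq w hw
    calc |E v - EΦ v| = |(E v - E w) - (EΦ v - EΦ w)| := by rw [h3]; ring_nf
      _ ≤ |E v - E w| + |EΦ v - EΦ w| := abs_sub _ _
      _ ≤ 2 * N * c := by linarith

end
end

section
/- Let $\phi_1, \dots, \phi_N$ be functions in $L^2(\mathbb{R}^3)$ defined by $\phi^k(x) = \sqrt{\rho(x)/N}\, e^{i k f(x_1)}$ for $k = 1, \dots, N$, where $\rho \ge 0$ is integrable with $\int_{\mathbb{R}^3} \rho = N$, and $f(x_1) = \frac{2\pi}{N} \int_{-\infty}^{x_1} \int_{\mathbb{R}} \int_{\mathbb{R}} \rho(s, t, u)\, du\, dt\, ds$. Then $(\phi^k)_{1 \le k \le N}$ is an orthonormal family in $L^2(\mathbb{R}^3)$. -/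
open MeasureTheory

noncomputable section

open Set Filter Topology in
private lemma lieb_cdf_level (ν : Measure ℝ) (M : ℝ) (hM : 0 < M)
    (F : ℝ → ℝ) (hF : ∀ t, ENNReal.ofReal (F t) = ν (Set.Iic t))
    (hF0 : ∀ t, 0 ≤ F t) (hcont : Continuous F)
    (htop : Tendsto F atTop (𝓝 M)) (hbot : Tendsto F atBot (𝓝 0)) :
    ∀ y : ℝ, ν {t | F t ≤ y} = ENNReal.ofReal (min y M) := by
  have hmono : Monotone F := by
    intro s t hst
    rw [← ENNReal.ofReal_le_ofReal_iff (hF0 t), hF, hF]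
    exact measure_mono (Iic_subset_Iic.2 hst)
  have hle : ∀ t, F t ≤ M := fun t => hmono.ge_of_tendsto htop t
  intro y
  rcases lt_or_ge y 0 with hy | hy
  · have : {t | F t ≤ y} = ∅ := by
      ext t; simp only [mem_setOf_eq, mem_empty_iff_false, iff_false, not_le]
      exact lt_of_lt_of_le hy (hF0 t)
    rw [this, measure_empty, min_eq_left (hy.le.trans hM.le), Eq.comm, ENNReal.ofReal_eq_zero]
    exact hy.le
  rcases le_or_gt M y with hyM | hyM
  · have huniv : {t | F t ≤ y} = univ := by
      ext t; simp only [mem_setOf_eq, mem_univ, iff_true]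
      exact (hle t).trans hyM
    have hνuniv : ν univ = ENNReal.ofReal M := by
      refine tendsto_nhds_unique (tendsto_measure_Iic_atTop ν) ?_
      exact ((ENNReal.continuous_ofReal.tendsto M).comp htop).congr fun x => hF x
    rw [huniv, hνuniv, min_eq_right hyM]
  · rw [min_eq_left hyM.le]
    set S := {t | F t ≤ y} with hS
    have hclosed : IsClosed S := isClosed_le hcont continuous_const
    obtain ⟨t₀, ht₀⟩ : ∃ t₀, y < F t₀ := (htop.eventually_const_lt hyM).exists
    have hbdd : BddAbove S := by
      refine ⟨t₀, fun t ht => ?_⟩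
      by_contra h
      push_neg at h
      exact absurd (hmono h.le) (not_le.2 (lt_of_le_of_lt ht ht₀))
    rcases eq_empty_or_nonempty S with hemp | hne
    · have hy0 : y = 0 := by
        by_contra h
        have hy' : 0 < y := lt_of_le_of_ne hy (Ne.symm h)
        obtain ⟨t, ht⟩ := (hbot.eventually_lt_const hy').exists
        have : t ∈ S := ht.le
        rw [hemp] at this
        exact this
      rw [hemp, measure_empty, hy0, ENNReal.ofReal_zero]
    · set v := sSup S with hv
      have hvS : v ∈ S := hclosed.csSup_mem hne hbdd
      have hSIic : S = Iic v := by
        ext t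
        constructor
        · exact fun ht => le_csSup hbdd ht
        · exact fun ht => le_trans (hmono ht) hvS
      have hFv : F v = y := by
        refine le_antisymm hvS ?_
        by_contra h
        push_neg at h
        have hev : ∀ᶠ t in 𝓝[>] v, F t < y :=
          ((hcont.tendsto v).eventually_lt_const h).filter_mono nhdsWithin_le_nhds
        obtain ⟨t, htlt, htv⟩ := (hev.and self_mem_nhdsWithin).exists
        exact absurd (le_csSup hbdd htlt.le) (not_le.2 htv)
      rw [hSIic, ← hF, hFv]

open Set Filter Topology in
private lemma lieb_cdf_map (ν : Measure ℝ) (M : ℝ) (hM : 0 < M)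
    (F : ℝ → ℝ) (hF : ∀ t, ENNReal.ofReal (F t) = ν (Set.Iic t))
    (hF0 : ∀ t, 0 ≤ F t) (hcont : Continuous F)
    (htop : Tendsto F atTop (𝓝 M)) (hbot : Tendsto F atBot (𝓝 0)) :
    ν.map F = volume.restrict (Set.Ioc 0 M) := by
  have hlevel := lieb_cdf_level ν M hM F hF hF0 hcont htop hbot
  have hνuniv : ν univ = ENNReal.ofReal M := by
    refine tendsto_nhds_unique (tendsto_measure_Iic_atTop ν) ?_
    exact ((ENNReal.continuous_ofReal.tendsto M).comp htop).congr fun x => hF x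
  have : IsFiniteMeasure (ν.map F) := by
    constructor
    rw [Measure.map_apply hcont.measurable MeasurableSet.univ, preimage_univ, hνuniv]
    exact ENNReal.ofReal_lt_top
  refine Measure.ext_of_Iic (ν.map F) _ (fun a => ?_)
  rw [Measure.map_apply hcont.measurable measurableSet_Iic]
  have hpre : F ⁻¹' (Iic a) = {t | F t ≤ a} := rfl
  rw [hpre, hlevel a, Measure.restrict_apply measurableSet_Iic]
  have hset : Iic a ∩ Ioc 0 M = Ioc 0 (min a M) := by
    ext t
    simp only [mem_inter_iff, mem_Iic, mem_Ioc, le_min_iff]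
    tauto
  rw [hset, Real.volume_Ioc, sub_zero]

open Set Filter Topology in
private lemma lieb_F_cont (ρ : ℝ × ℝ × ℝ → ℝ) (hρpos : ∀ x, 0 ≤ ρ x)
    (hρint : Integrable ρ volume) :
    Continuous (fun t => ∫ p in {q : ℝ × ℝ × ℝ | q.1 ≤ t}, ρ p) ∧
    Tendsto (fun t => ∫ p in {q : ℝ × ℝ × ℝ | q.1 ≤ t}, ρ p) atTop (𝓝 (∫ x, ρ x)) ∧
    Tendsto (fun t => ∫ p in {q : ℝ × ℝ × ℝ | q.1 ≤ t}, ρ p) atBot (𝓝 0) := by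
  have hmeas : ∀ t : ℝ, MeasurableSet {q : ℝ × ℝ × ℝ | q.1 ≤ t} :=
    fun t => measurable_fst measurableSet_Iic
  have hind : ∀ t : ℝ, (∫ p in {q : ℝ × ℝ × ℝ | q.1 ≤ t}, ρ p)
      = ∫ x, Set.indicator {q : ℝ × ℝ × ℝ | q.1 ≤ t} ρ x :=
    fun t => (integral_indicator (hmeas t)).symm
  have hmeas' : ∀ t : ℝ, AEStronglyMeasurable (Set.indicator {q : ℝ × ℝ × ℝ | q.1 ≤ t} ρ) volume :=
    fun t => hρint.1.indicator (hmeas t)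
  have hbound : ∀ t : ℝ, ∀ᵐ x : ℝ × ℝ × ℝ, ‖Set.indicator {q : ℝ × ℝ × ℝ | q.1 ≤ t} ρ x‖ ≤ ρ x := by
    intro t
    refine ae_of_all _ fun x => ?_
    rw [Real.norm_eq_abs, abs_of_nonneg (Set.indicator_nonneg (fun y _ => hρpos y) x)]
    exact Set.indicator_le_self' (fun y _ => hρpos y) x
  refine ⟨?_, ?_, ?_⟩
  · rw [continuous_iff_continuousAt]
    intro v
    have hnull : (volume : Measure (ℝ × ℝ × ℝ)) {x | x.1 = v} = 0 := by
      have hps : {x : ℝ × ℝ × ℝ | x.1 = v} = ({v} : Set ℝ) ×ˢ (Set.univ : Set (ℝ × ℝ)) := by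
        ext x
        simp only [Set.mem_setOf_eq, Set.mem_prod, Set.mem_singleton_iff, Set.mem_univ, and_true]
      rw [hps, Measure.volume_eq_prod, Measure.prod_prod, Real.volume_singleton, zero_mul]
    have hae : ∀ᵐ x : ℝ × ℝ × ℝ, x.1 ≠ v := by
      rw [ae_iff]
      simpa [not_not] using hnull
    unfold ContinuousAt
    simp_rw [hind]
    refine tendsto_integral_filter_of_dominated_convergence ρ
      (Eventually.of_forall hmeas') (Eventually.of_forall hbound) hρint ?_
    filter_upwards [hae] with x hx
    rcases lt_or_gt_of_ne hx with h | h
    · refine Tendsto.congr' ?_ tendsto_const_nhds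
      filter_upwards [Ioi_mem_nhds h] with t ht
      rw [Set.indicator_of_mem (show x ∈ {q : ℝ × ℝ × ℝ | q.1 ≤ t} from (show x.1 < t from ht).le),
        Set.indicator_of_mem (show x ∈ {q : ℝ × ℝ × ℝ | q.1 ≤ v} from h.le)]
    · refine Tendsto.congr' ?_ tendsto_const_nhds
      filter_upwards [Iio_mem_nhds h] with t ht
      have h1 : x ∉ {q : ℝ × ℝ × ℝ | q.1 ≤ t} := by
        simp only [Set.mem_setOf_eq, not_le]; exact ht
      have h2 : x ∉ {q : ℝ × ℝ × ℝ | q.1 ≤ v} := by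
        simp only [Set.mem_setOf_eq, not_le]; exact h
      rw [Set.indicator_of_notMem h1, Set.indicator_of_notMem h2]
  · simp_rw [hind]
    refine tendsto_integral_filter_of_dominated_convergence ρ
      (Eventually.of_forall hmeas') (Eventually.of_forall hbound) hρint ?_
    refine ae_of_all _ fun x => Tendsto.congr' ?_ tendsto_const_nhds
    filter_upwards [eventually_ge_atTop x.1] with t ht
    exact (Set.indicator_of_mem (show x ∈ {q : ℝ × ℝ × ℝ | q.1 ≤ t} from ht) ρ).symm
  · simp_rw [hind]
    have hlim : ∀ᵐ x : ℝ × ℝ × ℝ, Tendsto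
        (fun t => Set.indicator {q : ℝ × ℝ × ℝ | q.1 ≤ t} ρ x) atBot
        (𝓝 ((fun _ : ℝ × ℝ × ℝ => (0 : ℝ)) x)) := by
      refine ae_of_all _ fun x => Tendsto.congr' ?_ tendsto_const_nhds
      filter_upwards [eventually_lt_atBot x.1] with t ht
      have h1 : x ∉ {q : ℝ × ℝ × ℝ | q.1 ≤ t} := by
        simp only [Set.mem_setOf_eq, not_le]; exact ht
      exact (Set.indicator_of_notMem h1 ρ).symm
    simpa using tendsto_integral_filter_of_dominated_convergence ρ
      (Eventually.of_forall hmeas') (Eventually.of_forall hbound) hρint hlim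

/-- **Lieb's orthonormal orbitals.** Given `ρ ≥ 0` integrable on `ℝ³` with `∫ ρ = N`, the
orbitals `φᵏ(x) = √(ρ(x)/N) e^{i k f(x₁)}`, with
`f(x₁) = (2π/N) ∫_{s ≤ x₁} ∫∫ ρ(s,t,u) du dt ds`, form an orthonormal family in `L²`. -/
theorem lieb_orbitals_orthonormal
    (N : ℕ) (hN : 1 ≤ N)
    (ρ : ℝ × ℝ × ℝ → ℝ) (hρpos : ∀ x, 0 ≤ ρ x)
    (hρint : Integrable ρ volume) (hρmass : ∫ x, ρ x = (N : ℝ))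
    (f : ℝ → ℝ)
    (hf : ∀ t : ℝ, f t = (2 * Real.pi / N) * ∫ p in {q : ℝ × ℝ × ℝ | q.1 ≤ t}, ρ p)
    (φ : Fin N → ℝ × ℝ × ℝ → ℂ)
    (hφ : ∀ (k : Fin N) (x : ℝ × ℝ × ℝ),
      φ k x = (Real.sqrt (ρ x / N) : ℂ) * Complex.exp (Complex.I * ((k : ℕ) + 1) * f x.1)) :
    ∀ k l : Fin N,
      ∫ x, (starRingEnd ℂ) (φ k x) * φ l x = if k = l then 1 else 0 := by
  classical
  intro k l
  have hN0 : (0 : ℝ) < N := by exact_mod_cast hN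
  have hNc : ((N : ℝ) : ℂ) ≠ 0 := by
    exact_mod_cast ne_of_gt hN0
  set F : ℝ → ℝ := fun t => ∫ p in {q : ℝ × ℝ × ℝ | q.1 ≤ t}, ρ p with hFdef
  have hmeasS : ∀ t : ℝ, MeasurableSet {q : ℝ × ℝ × ℝ | q.1 ≤ t} :=
    fun t => measurable_fst measurableSet_Iic
  have hF0 : ∀ t, 0 ≤ F t := fun t => setIntegral_nonneg (hmeasS t) fun x _ => hρpos x
  obtain ⟨hcont, htop, hbot⟩ := lieb_F_cont ρ hρpos hρint
  rw [hρmass] at htop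
  -- the measure with density ρ and its first marginal
  set d : ℝ × ℝ × ℝ → NNReal := fun x => Real.toNNReal (ρ x) with hddef
  have hd : AEMeasurable d volume := hρint.1.aemeasurable.real_toNNReal
  set μ : Measure (ℝ × ℝ × ℝ) := volume.withDensity (fun x => (d x : ENNReal)) with hμdef
  set ν : Measure ℝ := μ.map Prod.fst with hνdef
  have hν : ∀ t, ENNReal.ofReal (F t) = ν (Set.Iic t) := by
    intro t
    rw [hνdef, Measure.map_apply measurable_fst measurableSet_Iic, hμdef]
    have hpre2 : (Prod.fst ⁻¹' Set.Iic t : Set (ℝ × ℝ × ℝ)) = {q : ℝ × ℝ × ℝ | q.1 ≤ t} := rfl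
    rw [hpre2, withDensity_apply _ (hmeasS t)]
    have : ∀ x : ℝ × ℝ × ℝ, ((d x : ENNReal)) = ENNReal.ofReal (ρ x) := fun x => rfl
    simp_rw [this]
    exact ofReal_integral_eq_lintegral_ofReal hρint.restrict
      (ae_restrict_of_ae (Filter.Eventually.of_forall hρpos))
  have hmap : ν.map F = volume.restrict (Set.Ioc 0 (N : ℝ)) :=
    lieb_cdf_map ν N hN0 F hν hF0 hcont htop hbot
  -- pointwise identity
  set c : ℂ := Complex.I * (((l : ℕ) : ℂ) - ((k : ℕ) : ℂ)) * (2 * (Real.pi : ℂ) / (N : ℂ))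
    with hcdef
  have hpt : ∀ x : ℝ × ℝ × ℝ, (starRingEnd ℂ) (φ k x) * φ l x
      = ((N : ℝ) : ℂ)⁻¹ * ((ρ x : ℂ) * Complex.exp (c * ((F x.1 : ℝ) : ℂ))) := by
    intro x
    have hsq : ((Real.sqrt (ρ x / N) : ℝ) : ℂ) * ((Real.sqrt (ρ x / N) : ℝ) : ℂ)
        = (ρ x : ℂ) / ((N : ℝ) : ℂ) := by
      rw [← Complex.ofReal_mul, Real.mul_self_sqrt (div_nonneg (hρpos x) hN0.le)]
      push_cast
      ring
    rw [hφ k x, hφ l x, map_mul, Complex.conj_ofReal, ← Complex.exp_conj,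
      mul_mul_mul_comm, hsq, ← Complex.exp_add]
    have hexp : (starRingEnd ℂ) (Complex.I * (((k : ℕ) : ℂ) + 1) * ((f x.1 : ℝ) : ℂ))
        + Complex.I * (((l : ℕ) : ℂ) + 1) * ((f x.1 : ℝ) : ℂ)
        = c * ((F x.1 : ℝ) : ℂ) := by
      simp only [map_mul, map_add, map_one, map_natCast, Complex.conj_I, Complex.conj_ofReal]
      rw [hf x.1, hcdef]
      simp only [hFdef]
      push_cast
      ring
    rw [hexp]
    rw [div_eq_inv_mul]
    ring
  have hEcont : Continuous fun s : ℝ => Complex.exp (c * ((F s : ℝ) : ℂ)) :=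
    Complex.continuous_exp.comp (continuous_const.mul (Complex.continuous_ofReal.comp hcont))
  have hGcont : Continuous fun y : ℝ => Complex.exp (c * ((y : ℝ) : ℂ)) :=
    Complex.continuous_exp.comp (continuous_const.mul Complex.continuous_ofReal)
  have hchain : ∫ x, (ρ x : ℂ) * Complex.exp (c * ((F x.1 : ℝ) : ℂ))
      = ∫ y in Set.Ioc (0 : ℝ) (N : ℝ), Complex.exp (c * ((y : ℝ) : ℂ)) := by
    have h1 : ∫ x, Complex.exp (c * ((F x.1 : ℝ) : ℂ)) ∂μ
        = ∫ x, d x • Complex.exp (c * ((F x.1 : ℝ) : ℂ)) ∂volume :=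
      integral_withDensity_eq_integral_smul₀ hd _
    have h2 : ∀ x : ℝ × ℝ × ℝ, d x • Complex.exp (c * ((F x.1 : ℝ) : ℂ))
        = (ρ x : ℂ) * Complex.exp (c * ((F x.1 : ℝ) : ℂ)) := by
      intro x
      rw [NNReal.smul_def, Real.coe_toNNReal _ (hρpos x), Complex.real_smul]
    have h3 : ∫ x, Complex.exp (c * ((F x.1 : ℝ) : ℂ)) ∂μ
        = ∫ s, Complex.exp (c * ((F s : ℝ) : ℂ)) ∂ν := by
      rw [hνdef]
      exact (integral_map measurable_fst.aemeasurable
        (hEcont.aestronglyMeasurable)).symm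
    have h4 : ∫ s, Complex.exp (c * ((F s : ℝ) : ℂ)) ∂ν
        = ∫ y, Complex.exp (c * ((y : ℝ) : ℂ)) ∂(ν.map F) :=
      (integral_map hcont.measurable.aemeasurable hGcont.aestronglyMeasurable).symm
    calc ∫ x, (ρ x : ℂ) * Complex.exp (c * ((F x.1 : ℝ) : ℂ))
        = ∫ x, d x • Complex.exp (c * ((F x.1 : ℝ) : ℂ)) ∂volume := by
          simp_rw [h2]
      _ = ∫ x, Complex.exp (c * ((F x.1 : ℝ) : ℂ)) ∂μ := h1.symm
      _ = ∫ s, Complex.exp (c * ((F s : ℝ) : ℂ)) ∂ν := h3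
      _ = ∫ y, Complex.exp (c * ((y : ℝ) : ℂ)) ∂(ν.map F) := h4
      _ = ∫ y in Set.Ioc (0 : ℝ) (N : ℝ), Complex.exp (c * ((y : ℝ) : ℂ)) := by rw [hmap]
  have hmain : ∫ x, (starRingEnd ℂ) (φ k x) * φ l x
      = ((N : ℝ) : ℂ)⁻¹ * ∫ y in Set.Ioc (0 : ℝ) (N : ℝ), Complex.exp (c * ((y : ℝ) : ℂ)) := by
    simp_rw [hpt]
    rw [integral_const_mul, hchain]
  rw [hmain]
  by_cases hkl : k = l
  · subst hkl
    have hc0 : c = 0 := by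
      rw [hcdef]
      ring
    rw [hc0, if_pos rfl]
    simp only [zero_mul, Complex.exp_zero]
    rw [setIntegral_const, Real.volume_real_Ioc_of_le hN0.le, sub_zero,
      Complex.real_smul, mul_one, inv_mul_cancel₀ hNc]
  · have hc0 : c ≠ 0 := by
      rw [hcdef]
      refine mul_ne_zero (mul_ne_zero Complex.I_ne_zero ?_) ?_
      · rw [sub_ne_zero]
        intro h
        apply hkl
        have hval : (k : ℕ) = (l : ℕ) := by exact_mod_cast h.symm
        exact Fin.val_injective hval
      · refine div_ne_zero ?_ hNc
        have : (Real.pi : ℂ) ≠ 0 := by exact_mod_cast Real.pi_ne_zero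
        simpa using mul_ne_zero two_ne_zero this
    have hIoc : ∫ y in Set.Ioc (0 : ℝ) (N : ℝ), Complex.exp (c * ((y : ℝ) : ℂ))
        = ∫ y in (0 : ℝ)..(N : ℝ), Complex.exp (c * ((y : ℝ) : ℂ)) :=
      (intervalIntegral.integral_of_le hN0.le).symm
    rw [hIoc, integral_exp_mul_complex hc0]
    have hEN : Complex.exp (c * ((N : ℝ) : ℂ)) = 1 := by
      have hm : c * ((N : ℝ) : ℂ) = ((((l : ℕ) : ℤ) - ((k : ℕ) : ℤ) : ℤ) : ℂ) * (2 * Real.pi * Complex.I) := by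
        have hNc2 : ((N : ℕ) : ℂ) ≠ 0 := Nat.cast_ne_zero.mpr (by omega)
        rw [hcdef]
        push_cast
        field_simp
      rw [hm, Complex.exp_int_mul_two_pi_mul_I]
    rw [hEN]
    simp only [Complex.ofReal_zero, mul_zero, Complex.exp_zero, sub_self, zero_div, mul_zero]
    rw [if_neg hkl]

end
end
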